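/- Let V be a normed space, λ₁, λ₂ < 0, B ≥ 0, and suppose differentiable functions a, b : ℝ≥0 → ℝ≥0 satisfy a(t) ≤ a(0)e^{λ₁ t} and the upper Dini derivative bound D⁺b(t) ≤ B·a(t) + λ₂·b(t) for all t. Then b(t) ≤ b(0)e^{λ₂ t} + (B·a(0)/(λ₁ − λ₂))·(e^{λ₁ t} − e^{λ₂ t}) for all t ≥ 0, assuming λ₁ ≠ λ₂. In particular b(t) → 0 as t → ∞. -/

import Mathlib

open Filter

/-- Comparison lemma for feedforward (cascade) combinations: the driven
perturbation decays whenever the driving perturbation decays. -/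
theorem feedforward_comparison (a b b' : ℝ → ℝ) (lam₁ lam₂ B : ℝ)
    (hlam₁ : lam₁ < 0) (hlam₂ : lam₂ < 0) (hB : 0 ≤ B) (hne : lam₁ ≠ lam₂)
    (ha0 : ∀ t : ℝ, 0 ≤ t → 0 ≤ a t) (hb0 : ∀ t : ℝ, 0 ≤ t → 0 ≤ b t)
    (ha : ∀ t : ℝ, 0 ≤ t → a t ≤ a 0 * Real.exp (lam₁ * t))
    (hb : ∀ t : ℝ, 0 ≤ t → HasDerivAt b (b' t) t)
    (hb' : ∀ t : ℝ, 0 ≤ t → b' t ≤ B * a t + lam₂ * b t) :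
    (∀ t : ℝ, 0 ≤ t →
      b t ≤ b 0 * Real.exp (lam₂ * t) +
        (B * a 0 / (lam₁ - lam₂)) * (Real.exp (lam₁ * t) - Real.exp (lam₂ * t))) ∧
    Tendsto b atTop (nhds 0) := by
  set C : ℝ := B * a 0 / (lam₁ - lam₂) with hC
  set φ : ℝ → ℝ := fun t => b t * Real.exp (-lam₂ * t) - C * Real.exp ((lam₁ - lam₂) * t)
    with hφ
  set φ' : ℝ → ℝ := fun t =>
    (b' t - lam₂ * b t) * Real.exp (-lam₂ * t) - B * a 0 * Real.exp ((lam₁ - lam₂) * t)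
    with hφ'
  have hder : ∀ t : ℝ, 0 ≤ t → HasDerivAt φ (φ' t) t := by
    intro t ht
    have h1 : HasDerivAt (fun t => Real.exp (-lam₂ * t)) (-lam₂ * Real.exp (-lam₂ * t)) t := by
      simpa [mul_comm] using ((hasDerivAt_id t).const_mul (-lam₂)).exp
    have h2 : HasDerivAt (fun t => Real.exp ((lam₁ - lam₂) * t))
        ((lam₁ - lam₂) * Real.exp ((lam₁ - lam₂) * t)) t := by
      simpa [mul_comm] using ((hasDerivAt_id t).const_mul (lam₁ - lam₂)).exp
    have := ((hb t ht).mul h1).sub (h2.const_mul C)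
    refine this.congr_deriv ?_
    have hCmul : C * (lam₁ - lam₂) = B * a 0 := by
      rw [hC]; exact div_mul_cancel₀ _ (sub_ne_zero.mpr hne)
    simp only [hφ']
    rw [← hCmul]; ring
  have hder_nonpos : ∀ t : ℝ, 0 ≤ t → φ' t ≤ 0 := by
    intro t ht
    have h1 : b' t - lam₂ * b t ≤ B * a t := by linarith [hb' t ht]
    have h2 : B * a t ≤ B * (a 0 * Real.exp (lam₁ * t)) :=
      mul_le_mul_of_nonneg_left (ha t ht) hB
    have h3 : (b' t - lam₂ * b t) * Real.exp (-lam₂ * t)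
        ≤ B * a 0 * Real.exp (lam₁ * t) * Real.exp (-lam₂ * t) := by
      have := mul_le_mul_of_nonneg_right (le_trans h1 h2) (Real.exp_pos (-lam₂ * t)).le
      linarith [this]
    have h4 : Real.exp (lam₁ * t) * Real.exp (-lam₂ * t) = Real.exp ((lam₁ - lam₂) * t) := by
      rw [← Real.exp_add]; ring_nf
    simp only [hφ']
    calc (b' t - lam₂ * b t) * Real.exp (-lam₂ * t) - B * a 0 * Real.exp ((lam₁ - lam₂) * t)
        ≤ B * a 0 * Real.exp (lam₁ * t) * Real.exp (-lam₂ * t)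
          - B * a 0 * Real.exp ((lam₁ - lam₂) * t) := by linarith
      _ = 0 := by rw [mul_assoc, h4]; ring
  have key : ∀ t : ℝ, 0 ≤ t → φ t ≤ φ 0 := by
    intro t ht
    rcases eq_or_lt_of_le ht with h | h
    · rw [← h]
    have hmono : AntitoneOn φ (Set.Icc 0 t) := by
      apply antitoneOn_of_deriv_nonpos (convex_Icc 0 t)
      · exact fun x hx => ((hder x hx.1).continuousAt).continuousWithinAt
      · intro x hx
        rw [interior_Icc] at hx
        exact ((hder x hx.1.le).differentiableAt).differentiableWithinAt
      · intro x hx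
        rw [interior_Icc] at hx
        rw [(hder x hx.1.le).deriv]
        exact hder_nonpos x hx.1.le
    exact hmono (Set.left_mem_Icc.mpr ht) (Set.mem_Icc.mpr ⟨ht, le_refl t⟩) ht
  have hbound : ∀ t : ℝ, 0 ≤ t →
      b t ≤ b 0 * Real.exp (lam₂ * t) + C * (Real.exp (lam₁ * t) - Real.exp (lam₂ * t)) := by
    intro t ht
    have h0 : φ 0 = b 0 - C := by simp [hφ]
    have h1 : φ t ≤ b 0 - C := h0 ▸ key t ht
    have h2 : b t * Real.exp (-lam₂ * t) ≤ b 0 - C + C * Real.exp ((lam₁ - lam₂) * t) := by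
      have := h1; simp only [hφ] at this; linarith
    have h3 := mul_le_mul_of_nonneg_right h2 (Real.exp_pos (lam₂ * t)).le
    have e1 : Real.exp (-lam₂ * t) * Real.exp (lam₂ * t) = 1 := by
      rw [← Real.exp_add]; ring_nf; exact Real.exp_zero
    have e2 : Real.exp ((lam₁ - lam₂) * t) * Real.exp (lam₂ * t) = Real.exp (lam₁ * t) := by
      rw [← Real.exp_add]; ring_nf
    calc b t = b t * Real.exp (-lam₂ * t) * Real.exp (lam₂ * t) := by
          rw [mul_assoc, e1, mul_one]
      _ ≤ (b 0 - C + C * Real.exp ((lam₁ - lam₂) * t)) * Real.exp (lam₂ * t) := h3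
      _ = b 0 * Real.exp (lam₂ * t) + C * (Real.exp (lam₁ * t) - Real.exp (lam₂ * t)) := by
          rw [add_mul, mul_assoc, e2]; ring
  refine ⟨hbound, ?_⟩
  have hexp : ∀ lam : ℝ, lam < 0 →
      Tendsto (fun t => Real.exp (lam * t)) atTop (nhds 0) := by
    intro lam hlam
    apply Real.tendsto_exp_atBot.comp
    exact Tendsto.const_mul_atTop_of_neg hlam tendsto_id
  have h1 := hexp lam₁ hlam₁
  have h2 := hexp lam₂ hlam₂
  have hub : Tendsto (fun t => b 0 * Real.exp (lam₂ * t)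
      + C * (Real.exp (lam₁ * t) - Real.exp (lam₂ * t))) atTop (nhds 0) := by
    have := (h2.const_mul (b 0)).add ((h1.sub h2).const_mul C)
    simpa using this
  apply tendsto_of_tendsto_of_tendsto_of_le_of_le' tendsto_const_nhds hub
  · filter_upwards [eventually_ge_atTop (0 : ℝ)] with t ht using hb0 t ht
  · filter_upwards [eventually_ge_atTop (0 : ℝ)] with t ht using hbound t ht
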